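/- (One iteration of Oblique Iterative Hard Thresholding.) Let Ψ, Ψ̃ ∈ K^{m×n}, let x* ∈ K^n be s-sparse, let z ∈ K^m and y = Ψx* + z, and let x ∈ K^n be s-sparse. Let x⁺ = H_s(x + Ψ̃*(y − Ψx)) be any best s-term approximation of x + Ψ̃*(y − Ψx). Then ‖x⁺ − x*‖₂ ≤ 2·θ_{3s}(Ψ̃*Ψ)·‖x − x*‖₂ + 2·√(1 + δ_{2s}(Ψ̃))·‖z‖₂. -/

import Mathlib

open scoped BigOperators
open Matrix MeasureTheory

noncomputable section

namespace ObliquePursuit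

variable {𝕜 : Type*} [RCLike 𝕜]

/-- The Euclidean (`ℓ²`) norm of a finitely indexed vector. -/
def l2 {ι : Type*} [Fintype ι] (x : ι → 𝕜) : ℝ :=
  Real.sqrt (∑ i, ‖x i‖ ^ 2)

/-- The spectral (`ℓ² → ℓ²` operator) norm of a matrix. -/
def specNorm {ι κ : Type*} [Fintype ι] [Fintype κ] [DecidableEq κ]
    (M : Matrix ι κ 𝕜) : ℝ :=
  ‖LinearMap.toContinuousLinearMap (Matrix.toEuclideanLin M)‖

/-- `x` is `s`-sparse: it has at most `s` nonzero entries. -/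
def Sparse {ι : Type*} (s : ℕ) (x : ι → 𝕜) : Prop :=
  ∃ J : Finset ι, J.card ≤ s ∧ ∀ i, x i ≠ 0 → i ∈ J

/-- The `s`-restricted biorthogonality constant `θ_s(M)`: the smallest `δ ≥ 0` such that
`|⟨y, Mx⟩ − ⟨y, x⟩| ≤ δ‖x‖₂‖y‖₂` for all `x, y` supported on a common index set of
cardinality at most `s`. -/
def theta {ι : Type*} [Fintype ι] (s : ℕ) (M : Matrix ι ι 𝕜) : ℝ :=
  sInf {δ : ℝ | 0 ≤ δ ∧ ∀ J : Finset ι, J.card ≤ s →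
    ∀ x y : ι → 𝕜, (∀ i, x i ≠ 0 → i ∈ J) → (∀ i, y i ≠ 0 → i ∈ J) →
      ‖star y ⬝ᵥ M.mulVec x - star y ⬝ᵥ x‖ ≤ δ * l2 x * l2 y}

/-- The `s`-restricted isometry constant `δ_s(Ψ)`. -/
def ric {ι κ : Type*} [Fintype ι] [Fintype κ] (s : ℕ) (Ψ : Matrix ι κ 𝕜) : ℝ :=
  sInf {δ : ℝ | 0 ≤ δ ∧ ∀ x : κ → 𝕜, Sparse s x →
    (1 - δ) * l2 x ^ 2 ≤ l2 (Ψ.mulVec x) ^ 2 ∧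
      l2 (Ψ.mulVec x) ^ 2 ≤ (1 + δ) * l2 x ^ 2}

/-- Coordinate projection `Π_J`: keep the entries indexed by `J`, zero out the others. -/
def proj {ι : Type*} [DecidableEq ι] (J : Finset ι) (x : ι → 𝕜) : ι → 𝕜 :=
  fun i => if i ∈ J then x i else 0

/-- The column submatrix `Ψ_J` of `Ψ` formed by the columns indexed by `J`. -/
def cols {ι κ : Type*} (Ψ : Matrix ι κ 𝕜) (J : Finset κ) :
    Matrix ι {j // j ∈ J} 𝕜 :=
  Ψ.submatrix id fun j => (j : κ)

/-- The `j`-th column of `Ψ`. -/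
def col {ι κ : Type*} (Ψ : Matrix ι κ 𝕜) (j : κ) : ι → 𝕜 :=
  fun i => Ψ i j

/-- The complementary oblique projector `E = I − Ψ_J (Ψ̃_J^* Ψ_J)⁻¹ Ψ̃_J^*`
(equal to `I` when `J = ∅`). -/
def obliqueE {ι κ : Type*} [Fintype ι] [DecidableEq ι] [DecidableEq κ]
    (Ψ Ψt : Matrix ι κ 𝕜) (J : Finset κ) : Matrix ι ι 𝕜 :=
  1 - cols Ψ J * ((cols Ψt J)ᴴ * cols Ψ J)⁻¹ * (cols Ψt J)ᴴ

/-- The smallest (real) eigenvalue of a matrix. -/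
def lamMin {ι : Type*} [Fintype ι] (G : Matrix ι ι 𝕜) : ℝ :=
  sInf {r : ℝ | ∃ v : ι → 𝕜, v ≠ 0 ∧ G.mulVec v = (r : 𝕜) • v}

/-- The `j`-th largest singular value (1-indexed) of a matrix, characterized via the
Eckart–Young–Mirsky theorem: `σ_j(A) = min { ‖A − B‖ : rank B < j }` where `‖·‖` is the
spectral norm. -/
def singVal {ι κ : Type*} [Fintype ι] [Fintype κ] [DecidableEq κ]
    (A : Matrix ι κ 𝕜) (j : ℕ) : ℝ :=
  sInf {r : ℝ | ∃ B : Matrix ι κ 𝕜, B.rank < j ∧ r = specNorm (A - B)}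


section Helpers

variable {ι κ : Type*} [Fintype ι] [Fintype κ]

lemma l2_eq_norm (x : ι → 𝕜) : l2 x = ‖(WithLp.equiv 2 (ι → 𝕜)).symm x‖ := by
  rw [EuclideanSpace.norm_eq]; rfl

lemma l2_nonneg (x : ι → 𝕜) : 0 ≤ l2 x := Real.sqrt_nonneg _

lemma sq_l2 (x : ι → 𝕜) : l2 x ^ 2 = ∑ i, ‖x i‖ ^ 2 := by
  rw [l2, Real.sq_sqrt]; positivity

lemma l2_neg (x : ι → 𝕜) : l2 (-x) = l2 x := by
  simp [l2]

lemma l2_add_le (x y : ι → 𝕜) : l2 (x + y) ≤ l2 x + l2 y := by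
  simp only [l2_eq_norm]
  exact norm_add_le ((WithLp.equiv 2 (ι → 𝕜)).symm x) ((WithLp.equiv 2 (ι → 𝕜)).symm y)

lemma cauchy_schwarz (x y : ι → 𝕜) : ‖star x ⬝ᵥ y‖ ≤ l2 x * l2 y := by
  have h : (star x ⬝ᵥ y : 𝕜) =
      inner 𝕜 ((WithLp.equiv 2 (ι → 𝕜)).symm x) ((WithLp.equiv 2 (ι → 𝕜)).symm y) := by
    simp [dotProduct, PiLp.inner_apply, RCLike.inner_apply, mul_comm]
  rw [h, l2_eq_norm, l2_eq_norm]
  exact norm_inner_le_norm _ _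

lemma l2_mulVec_le {ι κ : Type*} [Fintype ι] [Fintype κ] [DecidableEq κ]
    (A : Matrix ι κ 𝕜) (x : κ → 𝕜) : l2 (A.mulVec x) ≤ specNorm A * l2 x := by
  rw [l2_eq_norm, l2_eq_norm, WithLp.equiv_symm_apply, ← Matrix.toEuclideanLin_apply_piLp_toLp]
  exact (LinearMap.toContinuousLinearMap (Matrix.toEuclideanLin A)).le_opNorm _

lemma specNorm_nonneg {ι κ : Type*} [Fintype ι] [Fintype κ] [DecidableEq κ]
    (A : Matrix ι κ 𝕜) : 0 ≤ specNorm A := norm_nonneg _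

lemma theta_mem [DecidableEq ι] (s : ℕ) (M : Matrix ι ι 𝕜) :
    theta s M ∈ {δ : ℝ | 0 ≤ δ ∧ ∀ J : Finset ι, J.card ≤ s →
      ∀ x y : ι → 𝕜, (∀ i, x i ≠ 0 → i ∈ J) → (∀ i, y i ≠ 0 → i ∈ J) →
        ‖star y ⬝ᵥ M.mulVec x - star y ⬝ᵥ x‖ ≤ δ * l2 x * l2 y} := by
  set S := {δ : ℝ | 0 ≤ δ ∧ ∀ J : Finset ι, J.card ≤ s →
      ∀ x y : ι → 𝕜, (∀ i, x i ≠ 0 → i ∈ J) → (∀ i, y i ≠ 0 → i ∈ J) →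
        ‖star y ⬝ᵥ M.mulVec x - star y ⬝ᵥ x‖ ≤ δ * l2 x * l2 y} with hS
  have hne : S.Nonempty := by
    refine ⟨specNorm (M - 1), specNorm_nonneg _, fun J _ x y _ _ => ?_⟩
    have h1 : star y ⬝ᵥ M.mulVec x - star y ⬝ᵥ x = star y ⬝ᵥ ((M - 1).mulVec x) := by
      rw [sub_mulVec, one_mulVec, dotProduct_sub]
    rw [h1]
    calc ‖star y ⬝ᵥ ((M - 1).mulVec x)‖ ≤ l2 y * l2 ((M - 1).mulVec x) := cauchy_schwarz _ _
      _ ≤ l2 y * (specNorm (M - 1) * l2 x) :=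
          mul_le_mul_of_nonneg_left (l2_mulVec_le _ _) (l2_nonneg y)
      _ = specNorm (M - 1) * l2 x * l2 y := by ring
  have hbdd : BddBelow S := ⟨0, fun δ hδ => hδ.1⟩
  have hcl : IsClosed S := by
    have : S = {δ : ℝ | 0 ≤ δ} ∩ ⋂ (J : Finset ι) (x : ι → 𝕜) (y : ι → 𝕜),
        {δ : ℝ | (J.card ≤ s ∧ (∀ i, x i ≠ 0 → i ∈ J) ∧ (∀ i, y i ≠ 0 → i ∈ J)) →
          ‖star y ⬝ᵥ M.mulVec x - star y ⬝ᵥ x‖ ≤ δ * l2 x * l2 y} := by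
      ext δ
      simp only [hS, Set.mem_setOf_eq, Set.mem_inter_iff, Set.mem_iInter]
      constructor
      · rintro ⟨h0, h⟩
        exact ⟨h0, fun J x y ⟨h1, h2, h3⟩ => h J h1 x y h2 h3⟩
      · rintro ⟨h0, h⟩
        exact ⟨h0, fun J h1 x y h2 h3 => h J x y ⟨h1, h2, h3⟩⟩
    rw [this]
    refine IsClosed.inter (isClosed_le continuous_const continuous_id) ?_
    refine isClosed_iInter fun J => isClosed_iInter fun x => isClosed_iInter fun y => ?_
    by_cases h : J.card ≤ s ∧ (∀ i, x i ≠ 0 → i ∈ J) ∧ (∀ i, y i ≠ 0 → i ∈ J)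
    · have heq : {δ : ℝ | (J.card ≤ s ∧ (∀ i, x i ≠ 0 → i ∈ J) ∧ (∀ i, y i ≠ 0 → i ∈ J)) →
          ‖star y ⬝ᵥ M.mulVec x - star y ⬝ᵥ x‖ ≤ δ * l2 x * l2 y} =
          {δ : ℝ | ‖star y ⬝ᵥ M.mulVec x - star y ⬝ᵥ x‖ ≤ δ * l2 x * l2 y} := by
        ext δ; exact ⟨fun f => f h, fun f _ => f⟩
      rw [heq]
      exact isClosed_le continuous_const
        ((continuous_id.mul continuous_const).mul continuous_const)
    · have heq : {δ : ℝ | (J.card ≤ s ∧ (∀ i, x i ≠ 0 → i ∈ J) ∧ (∀ i, y i ≠ 0 → i ∈ J)) →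
          ‖star y ⬝ᵥ M.mulVec x - star y ⬝ᵥ x‖ ≤ δ * l2 x * l2 y} = Set.univ := by
        ext δ; simp only [Set.mem_setOf_eq, Set.mem_univ, iff_true]
        exact fun hc => absurd hc h
      rw [heq]; exact isClosed_univ
  exact hcl.csInf_mem hne hbdd

lemma ric_mem {ι κ : Type*} [Fintype ι] [Fintype κ] [DecidableEq κ] (s : ℕ) (Ψ : Matrix ι κ 𝕜) :
    ric s Ψ ∈ {δ : ℝ | 0 ≤ δ ∧ ∀ x : κ → 𝕜, Sparse s x →
      (1 - δ) * l2 x ^ 2 ≤ l2 (Ψ.mulVec x) ^ 2 ∧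
        l2 (Ψ.mulVec x) ^ 2 ≤ (1 + δ) * l2 x ^ 2} := by
  set S := {δ : ℝ | 0 ≤ δ ∧ ∀ x : κ → 𝕜, Sparse s x →
      (1 - δ) * l2 x ^ 2 ≤ l2 (Ψ.mulVec x) ^ 2 ∧
        l2 (Ψ.mulVec x) ^ 2 ≤ (1 + δ) * l2 x ^ 2} with hS
  have hne : S.Nonempty := by
    refine ⟨max 1 (specNorm Ψ ^ 2), le_trans zero_le_one (le_max_left _ _), fun x _ => ?_⟩
    constructor
    · have h1 : (1 : ℝ) - max 1 (specNorm Ψ ^ 2) ≤ 0 := by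
        have := le_max_left (1:ℝ) (specNorm Ψ ^ 2); linarith
      calc (1 - max 1 (specNorm Ψ ^ 2)) * l2 x ^ 2 ≤ 0 :=
            mul_nonpos_of_nonpos_of_nonneg h1 (by positivity)
        _ ≤ l2 (Ψ.mulVec x) ^ 2 := by positivity
    · calc l2 (Ψ.mulVec x) ^ 2 ≤ (specNorm Ψ * l2 x) ^ 2 :=
            pow_le_pow_left₀ (l2_nonneg _) (l2_mulVec_le Ψ x) 2
        _ = specNorm Ψ ^ 2 * l2 x ^ 2 := by ring
        _ ≤ (1 + max 1 (specNorm Ψ ^ 2)) * l2 x ^ 2 := by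
            have h2 : specNorm Ψ ^ 2 ≤ 1 + max 1 (specNorm Ψ ^ 2) := by
              have := le_max_right (1:ℝ) (specNorm Ψ ^ 2); linarith
            exact mul_le_mul_of_nonneg_right h2 (by positivity)
  have hbdd : BddBelow S := ⟨0, fun δ hδ => hδ.1⟩
  have hcl : IsClosed S := by
    have : S = {δ : ℝ | 0 ≤ δ} ∩ ⋂ (x : κ → 𝕜),
        {δ : ℝ | Sparse s x → ((1 - δ) * l2 x ^ 2 ≤ l2 (Ψ.mulVec x) ^ 2 ∧
          l2 (Ψ.mulVec x) ^ 2 ≤ (1 + δ) * l2 x ^ 2)} := by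
      ext δ
      simp only [hS, Set.mem_setOf_eq, Set.mem_inter_iff, Set.mem_iInter]
    rw [this]
    refine IsClosed.inter (isClosed_le continuous_const continuous_id) ?_
    refine isClosed_iInter fun x => ?_
    by_cases h : Sparse s x
    · have heq : {δ : ℝ | Sparse s x → ((1 - δ) * l2 x ^ 2 ≤ l2 (Ψ.mulVec x) ^ 2 ∧
          l2 (Ψ.mulVec x) ^ 2 ≤ (1 + δ) * l2 x ^ 2)} =
          {δ : ℝ | (1 - δ) * l2 x ^ 2 ≤ l2 (Ψ.mulVec x) ^ 2} ∩
          {δ : ℝ | l2 (Ψ.mulVec x) ^ 2 ≤ (1 + δ) * l2 x ^ 2} := by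
        ext δ; exact ⟨fun f => f h, fun f _ => f⟩
      rw [heq]
      refine IsClosed.inter ?_ ?_
      · exact isClosed_le ((continuous_const.sub continuous_id).mul continuous_const)
          continuous_const
      · exact isClosed_le continuous_const
          ((continuous_const.add continuous_id).mul continuous_const)
    · have heq : {δ : ℝ | Sparse s x → ((1 - δ) * l2 x ^ 2 ≤ l2 (Ψ.mulVec x) ^ 2 ∧
          l2 (Ψ.mulVec x) ^ 2 ≤ (1 + δ) * l2 x ^ 2)} = Set.univ := by
        ext δ; simp only [Set.mem_setOf_eq, Set.mem_univ, iff_true]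
        exact fun hc => absurd hc h
      rw [heq]; exact isClosed_univ
  exact hcl.csInf_mem hne hbdd

lemma l2_proj_eq [DecidableEq ι] (T : Finset ι) (a : ι → 𝕜) :
    l2 (proj T a) = Real.sqrt (∑ i ∈ T, ‖a i‖ ^ 2) := by
  unfold l2 proj
  congr 1
  rw [← Finset.sum_add_sum_compl T]
  have h1 : ∀ i ∈ T, ‖if i ∈ T then a i else 0‖ ^ 2 = ‖a i‖ ^ 2 := by
    intro i hi; simp [hi]
  have h2 : ∀ i ∈ Tᶜ, ‖if i ∈ T then a i else 0‖ ^ 2 = 0 := by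
    intro i hi; simp [Finset.mem_compl.mp hi]
  rw [Finset.sum_congr rfl h1, Finset.sum_eq_zero h2, add_zero]

lemma proj_support [DecidableEq ι] (T : Finset ι) (a : ι → 𝕜) :
    ∀ i, proj T a i ≠ 0 → i ∈ T := by
  intro i hi
  by_contra h
  simp [proj, h] at hi

lemma proj_dot [DecidableEq ι] (T : Finset ι) (q : ι → 𝕜) :
    star (proj T q) ⬝ᵥ q = ((l2 (proj T q) ^ 2 : ℝ) : 𝕜) := by
  have : ∀ i, (star (proj T q)) i * q i = ((‖proj T q i‖ ^ 2 : ℝ) : 𝕜) := by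
    intro i
    by_cases hi : i ∈ T
    · simp only [Pi.star_apply, proj, hi, if_true, RCLike.star_def]
      rw [RCLike.conj_mul]
      norm_cast
    · simp [proj, hi]
  rw [dotProduct, Finset.sum_congr rfl fun i _ => this i]
  rw [sq_l2]
  push_cast
  rfl

end Helpers

/-- one iteration of Oblique Iterative Hard Thresholding. -/
theorem statement8 (m n s : ℕ) (Ψ Ψt : Matrix (Fin m) (Fin n) 𝕜)
    (xstar x xplus : Fin n → 𝕜) (hxstar : Sparse s xstar) (hx : Sparse s x)
    (z y : Fin m → 𝕜) (hy : y = Ψ.mulVec xstar + z)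
    (hplus_sparse : Sparse s xplus)
    (hplus_best : ∀ w : Fin n → 𝕜, Sparse s w →
      l2 (x + Ψtᴴ.mulVec (y - Ψ.mulVec x) - xplus) ≤
        l2 (x + Ψtᴴ.mulVec (y - Ψ.mulVec x) - w)) :
    l2 (xplus - xstar) ≤
      2 * theta (3 * s) (Ψtᴴ * Ψ) * l2 (x - xstar) +
        2 * Real.sqrt (1 + ric (2 * s) Ψt) * l2 z := by
  classical
  obtain ⟨Jp, hJpc, hJp⟩ := hplus_sparse
  obtain ⟨Js, hJsc, hJs⟩ := hxstar
  obtain ⟨Jx, hJxc, hJx⟩ := hx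
  set T : Finset (Fin n) := Jp ∪ Js with hT
  set J : Finset (Fin n) := T ∪ Jx with hJ
  have hTc : T.card ≤ 2 * s := by
    calc T.card ≤ Jp.card + Js.card := Finset.card_union_le _ _
      _ ≤ 2 * s := by omega
  have hJc : J.card ≤ 3 * s := by
    calc J.card ≤ T.card + Jx.card := Finset.card_union_le _ _
      _ ≤ 3 * s := by omega
  set u : Fin n → 𝕜 := x + Ψtᴴ.mulVec (y - Ψ.mulVec x) with hu
  set v : Fin n → 𝕜 := x - xstar with hv
  set M : Matrix (Fin n) (Fin n) 𝕜 := Ψtᴴ * Ψ with hM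
  set w : Fin n → 𝕜 := proj T (M.mulVec v - v) with hw
  set w' : Fin n → 𝕜 := proj T (Ψtᴴ.mulVec z) with hw'
  -- Step 1 : l2 (xplus - xstar) ≤ 2 * l2 (proj T (u - xstar))
  have hbest : l2 (u - xplus) ≤ l2 (u - xstar) := hplus_best xstar ⟨Js, hJsc, hJs⟩
  have hcompl : ∀ i, i ∉ T → (u - xplus) i = (u - xstar) i := by
    intro i hi
    have h1 : xplus i = 0 := by
      by_contra h; exact hi (Finset.mem_union_left _ (hJp i h))
    have h2 : xstar i = 0 := by
      by_contra h; exact hi (Finset.mem_union_right _ (hJs i h))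
    simp [h1, h2]
  have hsum : ∑ i ∈ T, ‖(u - xplus) i‖ ^ 2 ≤ ∑ i ∈ T, ‖(u - xstar) i‖ ^ 2 := by
    have h1 : l2 (u - xplus) ^ 2 ≤ l2 (u - xstar) ^ 2 :=
      pow_le_pow_left₀ (l2_nonneg _) hbest 2
    rw [sq_l2, sq_l2, ← Finset.sum_add_sum_compl T (fun i => ‖(u - xplus) i‖ ^ 2),
      ← Finset.sum_add_sum_compl T (fun i => ‖(u - xstar) i‖ ^ 2)] at h1
    have h2 : ∑ i ∈ Tᶜ, ‖(u - xplus) i‖ ^ 2 = ∑ i ∈ Tᶜ, ‖(u - xstar) i‖ ^ 2 :=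
      Finset.sum_congr rfl fun i hi => by rw [hcompl i (Finset.mem_compl.mp hi)]
    linarith
  have hproj_le : l2 (proj T (u - xplus)) ≤ l2 (proj T (u - xstar)) := by
    rw [l2_proj_eq, l2_proj_eq]
    exact Real.sqrt_le_sqrt hsum
  have hsplit : xplus - xstar = proj T (xplus - u) + proj T (u - xstar) := by
    funext i
    by_cases hi : i ∈ T
    · simp only [Pi.add_apply, Pi.sub_apply, proj, hi, if_true]; ring
    · have h1 : xplus i = 0 := by
        by_contra h; exact hi (Finset.mem_union_left _ (hJp i h))
      have h2 : xstar i = 0 := by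
        by_contra h; exact hi (Finset.mem_union_right _ (hJs i h))
      simp [proj, hi, h1, h2]
  have hnegproj : proj T (xplus - u) = -(proj T (u - xplus)) := by
    funext i; by_cases hi : i ∈ T <;> simp [proj, hi]
  have step1 : l2 (xplus - xstar) ≤ 2 * l2 (proj T (u - xstar)) := by
    calc l2 (xplus - xstar) = l2 (proj T (xplus - u) + proj T (u - xstar)) := by rw [hsplit]
      _ ≤ l2 (proj T (xplus - u)) + l2 (proj T (u - xstar)) := l2_add_le _ _
      _ = l2 (proj T (u - xplus)) + l2 (proj T (u - xstar)) := by rw [hnegproj, l2_neg]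
      _ ≤ 2 * l2 (proj T (u - xstar)) := by linarith
  -- Step 2 : decomposition
  have hdec : u - xstar = -(M.mulVec v - v) + Ψtᴴ.mulVec z := by
    have h1 : y - Ψ.mulVec x = z - Ψ.mulVec v := by
      rw [hy, hv, Matrix.mulVec_sub]; abel
    rw [hu, h1, Matrix.mulVec_sub, Matrix.mulVec_mulVec, ← hM, hv]
    abel
  have hprojdec : proj T (u - xstar) = -w + w' := by
    rw [hdec]
    funext i
    by_cases hi : i ∈ T <;> simp [proj, hw, hw', hi]
  -- Step 3 : theta bound
  obtain ⟨hθ0, hθ⟩ := theta_mem (𝕜 := 𝕜) (3 * s) M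
  have hvsupp : ∀ i, v i ≠ 0 → i ∈ J := by
    intro i hi
    by_cases h1 : x i = 0
    · have h2 : xstar i ≠ 0 := fun h => hi (by rw [hv]; simp [Pi.sub_apply, h1, h])
      exact Finset.mem_union_left _ (Finset.mem_union_right _ (hJs i h2))
    · exact Finset.mem_union_right _ (hJx i h1)
  have hwsupp : ∀ i, w i ≠ 0 → i ∈ J := fun i hi =>
    Finset.mem_union_left _ (proj_support T _ i hi)
  have hθineq := hθ J hJc v w hvsupp hwsupp
  have hdot : ‖star w ⬝ᵥ M.mulVec v - star w ⬝ᵥ v‖ = l2 w ^ 2 := by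
    rw [← dotProduct_sub, hw, proj_dot, ← hw]
    rw [RCLike.norm_ofReal, abs_of_nonneg (by positivity)]
  have hwle : l2 w ≤ theta (3 * s) M * l2 v := by
    rw [hdot] at hθineq
    rcases eq_or_lt_of_le (l2_nonneg w) with h0 | h0
    · rw [← h0]; exact mul_nonneg hθ0 (l2_nonneg v)
    · nlinarith
  -- Step 4 : noise bound
  obtain ⟨hδ0, hδ⟩ := ric_mem (𝕜 := 𝕜) (2 * s) Ψt
  have hw'sp : Sparse (2 * s) w' := ⟨T, hTc, proj_support T _⟩
  have hΨub := (hδ w' hw'sp).2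
  have hdot' : (l2 w' ^ 2 : ℝ) = ‖star (Ψt.mulVec w') ⬝ᵥ z‖ := by
    rw [Matrix.star_mulVec, ← Matrix.dotProduct_mulVec, hw', proj_dot, ← hw']
    rw [RCLike.norm_ofReal, abs_of_nonneg (by positivity)]
  have hΨle : l2 (Ψt.mulVec w') ≤ Real.sqrt (1 + ric (2 * s) Ψt) * l2 w' := by
    have h1 := Real.sqrt_le_sqrt hΨub
    rwa [Real.sqrt_sq (l2_nonneg _), Real.sqrt_mul (by linarith),
      Real.sqrt_sq (l2_nonneg _)] at h1
  have hw'le : l2 w' ≤ Real.sqrt (1 + ric (2 * s) Ψt) * l2 z := by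
    have h1 : l2 w' ^ 2 ≤ l2 (Ψt.mulVec w') * l2 z := by
      rw [hdot']; exact cauchy_schwarz _ _
    have h2 : l2 w' ^ 2 ≤ Real.sqrt (1 + ric (2 * s) Ψt) * l2 w' * l2 z := by
      calc l2 w' ^ 2 ≤ l2 (Ψt.mulVec w') * l2 z := h1
        _ ≤ Real.sqrt (1 + ric (2 * s) Ψt) * l2 w' * l2 z :=
            mul_le_mul_of_nonneg_right hΨle (l2_nonneg z)
    rcases eq_or_lt_of_le (l2_nonneg w') with h0 | h0
    · rw [← h0]
      exact mul_nonneg (Real.sqrt_nonneg _) (l2_nonneg z)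
    · nlinarith
  -- Combine
  have hfinal : l2 (proj T (u - xstar)) ≤ l2 w + l2 w' := by
    rw [hprojdec]
    calc l2 (-w + w') ≤ l2 (-w) + l2 w' := l2_add_le _ _
      _ = l2 w + l2 w' := by rw [l2_neg]
  calc l2 (xplus - xstar) ≤ 2 * l2 (proj T (u - xstar)) := step1
    _ ≤ 2 * (l2 w + l2 w') := by linarith
    _ ≤ 2 * (theta (3 * s) M * l2 v + Real.sqrt (1 + ric (2 * s) Ψt) * l2 z) := by linarith
    _ = 2 * theta (3 * s) M * l2 v + 2 * Real.sqrt (1 + ric (2 * s) Ψt) * l2 z := by ring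

end ObliquePursuit
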